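/- Let a ≥ 1, r ≥ 2 be integers and m ≥ 0 an integer. Then ∏_{j=2}^{r} [ (m + a(j−1)/2) / (a(j−1)/2) · (m + 1 + a(j−2)/2)_{a−1} / (1 + a(j−2)/2)_{a−1} ] = (1/C') · ∏_{j=2}^{r} [ Γ(m + aj/2)/Γ(m + a(j−2)/2) + Γ(m + 1 + aj/2)/Γ(m + 1 + a(j−2)/2) ], where C' = a^{r−1}(r−1)! ∏_{j=2}^{r} Γ(aj/2)/Γ(1 + a(j−2)/2) and (x)_k = x(x+1)⋯(x+k−1) is the Pochhammer symbol. -/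
import Mathlib


/-- Rising factorial (Pochhammer symbol) `(x)_k = x(x+1)⋯(x+k−1)`. -/
noncomputable def poch (x : ℝ) (k : ℕ) : ℝ := ∏ i ∈ Finset.range k, (x + i)

lemma poch_pos {x : ℝ} (hx : 0 < x) (n : ℕ) : 0 < poch x n :=
  Finset.prod_pos fun i _ => by positivity

lemma poch_succ (x : ℝ) (n : ℕ) : poch x (n + 1) = poch x n * (x + n) :=
  Finset.prod_range_succ _ _

lemma poch_succ' (x : ℝ) (n : ℕ) : poch x (n + 1) = x * poch (x + 1) n := by
  rw [poch, Finset.prod_range_succ']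
  simp only [Nat.cast_zero, add_zero]
  rw [mul_comm]
  congr 1
  apply Finset.prod_congr rfl
  intro i _
  push_cast
  ring

lemma Gamma_add_nat {x : ℝ} (hx : 0 < x) (n : ℕ) :
    Real.Gamma (x + n) = Real.Gamma x * poch x n := by
  induction n with
  | zero => simp [poch]
  | succ n ih =>
    have h1 : (x + (n + 1 : ℕ) : ℝ) = (x + n) + 1 := by push_cast; ring
    rw [h1, Real.Gamma_add_one (by positivity), ih, poch_succ]
    ring

lemma Gamma_ratio {x : ℝ} (hx : 0 < x) (n : ℕ) :
    Real.Gamma (x + n) / Real.Gamma x = poch x n := by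
  rw [Gamma_add_nat hx n]
  field_simp

lemma prod_sub_one_factorial (r : ℕ) (hr : 2 ≤ r) :
    ∏ j ∈ Finset.Icc 2 r, ((j : ℝ) - 1) = (Nat.factorial (r - 1) : ℝ) := by
  induction r with
  | zero => omega
  | succ n ih =>
    rcases Nat.lt_or_ge n 2 with h | h
    · interval_cases n
      · omega
      · norm_num
    · rw [Finset.prod_Icc_succ_top (by omega), ih h]
      have hn : n - 1 + 1 = n := by omega
      have : (n + 1 : ℕ) - 1 = n := by omega
      rw [this]
      rw [← hn, Nat.factorial_succ]
      push_cast [hn]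
      ring

/-- The dimension `d'_{(m)}` of the degree-`m` Peter-Weyl space as an eigenvalue:
`∏_{j=2}^r [(m+a(j−1)/2)/(a(j−1)/2) · (m+1+a(j−2)/2)_{a−1}/(1+a(j−2)/2)_{a−1}]
  = (1/C') ∏_{j=2}^r [Γ(m+aj/2)/Γ(m+a(j−2)/2) + Γ(m+1+aj/2)/Γ(m+1+a(j−2)/2)]`. -/
theorem dim_single_row_eigenvalue (a r : ℕ) (ha : 1 ≤ a) (hr : 2 ≤ r) (m : ℕ) :
    ∏ j ∈ Finset.Icc 2 r,
        (((m : ℝ) + a * ((j : ℝ) - 1) / 2) / ((a : ℝ) * ((j : ℝ) - 1) / 2) *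
          (poch ((m : ℝ) + 1 + a * ((j : ℝ) - 2) / 2) (a - 1) /
            poch (1 + (a : ℝ) * ((j : ℝ) - 2) / 2) (a - 1))) =
      (1 / ((a : ℝ) ^ (r - 1) * (Nat.factorial (r - 1) : ℝ) *
          ∏ j ∈ Finset.Icc 2 r,
            (Real.Gamma (a * j / 2) / Real.Gamma (1 + a * ((j : ℝ) - 2) / 2)))) *
        ∏ j ∈ Finset.Icc 2 r,
          (Real.Gamma (m + a * j / 2) / Real.Gamma (m + a * ((j : ℝ) - 2) / 2) +
            Real.Gamma (m + 1 + a * j / 2) / Real.Gamma (m + 1 + a * ((j : ℝ) - 2) / 2)) := by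
  have hcard : (Finset.Icc 2 r).card = r - 1 := by rw [Nat.card_Icc]; omega
  have hC : (a : ℝ) ^ (r - 1) * (Nat.factorial (r - 1) : ℝ) *
      ∏ j ∈ Finset.Icc 2 r,
        (Real.Gamma (a * j / 2) / Real.Gamma (1 + a * ((j : ℝ) - 2) / 2)) =
      ∏ j ∈ Finset.Icc 2 r, ((a : ℝ) * ((j : ℝ) - 1) *
        (Real.Gamma (a * j / 2) / Real.Gamma (1 + a * ((j : ℝ) - 2) / 2))) := by
    rw [Finset.prod_mul_distrib, Finset.prod_mul_distrib, Finset.prod_const, hcard,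
      prod_sub_one_factorial r hr]
  rw [hC, one_div, ← Finset.prod_inv_distrib, ← Finset.prod_mul_distrib]
  apply Finset.prod_congr rfl
  intro j hj
  simp only [Finset.mem_Icc] at hj
  obtain ⟨hj2, _⟩ := hj
  have hj2' : (2 : ℝ) ≤ (j : ℝ) := by exact_mod_cast hj2
  have ha' : (1 : ℝ) ≤ (a : ℝ) := by exact_mod_cast ha
  set X : ℝ := (a : ℝ) * ((j : ℝ) - 2) / 2 with hX
  have hX0 : 0 ≤ X := by
    apply div_nonneg _ (by norm_num)
    apply mul_nonneg (by positivity)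
    linarith
  have hacast : ((a - 1 : ℕ) : ℝ) = (a : ℝ) - 1 := by
    push_cast [ha]; ring
  -- Γ(aj/2)/Γ(1+X) = poch (1+X) (a-1)
  have hA : Real.Gamma ((a : ℝ) * j / 2) / Real.Gamma (1 + X) = poch (1 + X) (a - 1) := by
    have h1 : (a : ℝ) * j / 2 = (1 + X) + ((a - 1 : ℕ) : ℝ) := by
      rw [hacast, hX]; ring
    rw [h1, Gamma_ratio (by linarith)]
  have hP0 : 0 < poch (1 + X) (a - 1) := poch_pos (by linarith) _
  have hPm : 0 < poch ((m : ℝ) + 1 + X) (a - 1) := poch_pos (by positivity) _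
  -- Γ(m+1+aj/2)/Γ(m+1+X) = poch(m+1+X)(a-1) * (m+X+a)
  have hB : Real.Gamma ((m : ℝ) + 1 + (a : ℝ) * j / 2) / Real.Gamma ((m : ℝ) + 1 + X) =
      poch ((m : ℝ) + 1 + X) (a - 1) * ((m : ℝ) + X + (a : ℝ)) := by
    have h1 : (m : ℝ) + 1 + (a : ℝ) * j / 2 = ((m : ℝ) + 1 + X) + ((a : ℕ) : ℝ) := by
      rw [hX]; ring
    rw [h1, Gamma_ratio (by positivity)]
    obtain ⟨b, rfl⟩ : ∃ b, a = b + 1 := ⟨a - 1, by omega⟩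
    rw [poch_succ]
    have : (b + 1) - 1 = b := by omega
    rw [this]
    push_cast
    ring
  -- Γ(m+aj/2)/Γ(m+X) = (m+X) * poch(m+1+X)(a-1)
  have hCk : Real.Gamma ((m : ℝ) + (a : ℝ) * j / 2) / Real.Gamma ((m : ℝ) + X) =
      ((m : ℝ) + X) * poch ((m : ℝ) + 1 + X) (a - 1) := by
    rcases eq_or_lt_of_le (by positivity : (0 : ℝ) ≤ (m : ℝ) + X) with h0 | h0
    · rw [← h0, Real.Gamma_zero, div_zero, zero_mul]
    · have h1 : (m : ℝ) + (a : ℝ) * j / 2 = ((m : ℝ) + X) + ((a : ℕ) : ℝ) := by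
        rw [hX]; ring
      rw [h1, Gamma_ratio h0]
      obtain ⟨b, rfl⟩ : ∃ b, a = b + 1 := ⟨a - 1, by omega⟩
      rw [poch_succ']
      have : (b + 1) - 1 = b := by omega
      rw [this]
      ring_nf
  rw [hA, hB, hCk]
  have hd1 : (a : ℝ) * ((j : ℝ) - 1) / 2 ≠ 0 := by
    apply ne_of_gt; apply div_pos _ (by norm_num)
    apply mul_pos (by linarith); linarith
  have hd2 : (a : ℝ) * ((j : ℝ) - 1) ≠ 0 := by
    apply ne_of_gt; apply mul_pos (by linarith); linarith
  have hrel : (a : ℝ) * ((j : ℝ) - 1) = 2 * X + (a : ℝ) := by rw [hX]; ring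
  rw [hrel]
  have hXa : (0 : ℝ) < 2 * X + (a : ℝ) := by linarith
  field_simp [hXa.ne', hP0.ne', hPm.ne']
  ring
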